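/- arXiv:1503.07502 — 2 statements merged into one kernel-verified Lean document; each statement's English description precedes it below -/
import Mathlib

section
/- Let f = g_Q ∗ 1 be a sieve function of range Q ≪ N with Eratosthenes transform g supported in [1,Q]. Then for all positive integers a and q, ∑_{n∼N, n≡a (mod q)} f(n) = (N/q) ∑_{d ≤ Q, (d,q)|a} (g(d)/d)·(d,q) + O_ε(Q^{1+ε}), where (d,q) denotes gcd(d,q). -/
open Finset
open scoped Classical

noncomputable section

/-- `e(α) = e^{2πiα}`. -/
def expi (α : ℝ) : ℂ := Complex.exp (2 * Real.pi * Complex.I * α)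

/-- The sieve function of range `Q` attached to the Eratosthenes transform `g`:
`f(n) = ∑_{d ∣ n, d ≤ Q} g(d)`. -/
def sieveFn (g : ℕ → ℝ) (Q : ℕ) (n : ℕ) : ℝ :=
  ∑ d ∈ n.divisors.filter (fun d => d ≤ Q), g d

/-- The sieve function evaluated at integer arguments (used for shifted arguments
`f(n-a)`, divisibility being understood in `ℤ`). -/
def sieveZ (g : ℕ → ℝ) (Q : ℕ) (m : ℤ) : ℝ :=
  ∑ d ∈ Finset.Icc 1 Q, if (d : ℤ) ∣ m then g d else 0

/-- `g` is essentially bounded, with constant `Cg ε` for the exponent `ε`: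
`g(d) ≪_ε d^ε` for every `ε > 0`. -/
def EssBddWith (Cg : ℝ → ℝ) (g : ℕ → ℝ) : Prop :=
  ∀ ε : ℝ, 0 < ε → ∀ d : ℕ, 1 ≤ d → |g d| ≤ Cg ε * (d : ℝ) ^ ε

/-- `g` is supported in `[1,Q]`. -/
def SuppIn (g : ℕ → ℝ) (Q : ℕ) : Prop := ∀ d : ℕ, g d ≠ 0 → 1 ≤ d ∧ d ≤ Q

/-- The restricted weight `w_H`. -/
def wH (w : ℝ → ℝ) (H : ℕ) (h : ℤ) : ℝ := if |h| ≤ (H : ℤ) then w h else 0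

/-- `ŵ_H(β) = ∑_{0 ≤ |h| ≤ H} w(h) e(hβ)`. -/
def wHat (w : ℝ → ℝ) (H : ℕ) (β : ℝ) : ℂ :=
  ∑ h ∈ Finset.Icc (-(H : ℤ)) (H : ℤ), (w h : ℂ) * expi (h * β)

/-- `ŵ_H(0)`, as a real number. -/
def wHat0 (w : ℝ → ℝ) (H : ℕ) : ℝ := ∑ h ∈ Finset.Icc (-(H : ℤ)) (H : ℤ), w h

/-- The correlation `W_H(a) = ∑_h w_H(h) w_H(h-a)` of `w_H`. -/
def WHcorr (w : ℝ → ℝ) (H : ℕ) (a : ℤ) : ℝ :=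
  ∑ h ∈ Finset.Icc (-(H : ℤ)) (H : ℤ), wH w H h * wH w H (h - a)

/-- `Ŵ_H(β) = ∑_{0 ≤ |h| ≤ 2H} W_H(h) e(hβ)`. -/
def WHat (w : ℝ → ℝ) (H : ℕ) (β : ℝ) : ℂ :=
  ∑ h ∈ Finset.Icc (-(2 * H : ℤ)) (2 * H : ℤ), (WHcorr w H h : ℂ) * expi (h * β)

/-- `Ŵ_H(0)`, as a real number. -/
def WHat0 (w : ℝ → ℝ) (H : ℕ) : ℝ :=
  ∑ h ∈ Finset.Icc (-(2 * H : ℤ)) (2 * H : ℤ), WHcorr w H h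

/-- `L¹_ℓ(F) = (1/ℓ) ∑_{j<ℓ, (j,ℓ)=1} |F(j/ℓ)|` (the sum being over `j ≥ 1`). -/
def Lone (F : ℝ → ℂ) (ℓ : ℕ) : ℝ :=
  (ℓ : ℝ)⁻¹ * ∑ j ∈ (Finset.Ico 1 ℓ).filter (fun j => Nat.Coprime j ℓ), ‖F (j / ℓ)‖

/-- `L²_ℓ(F) = (1/ℓ²) ∑_{j<ℓ} |F(j/ℓ)|²` (the sum being over `j ≥ 1`). -/
def Ltwo (F : ℝ → ℂ) (ℓ : ℕ) : ℝ :=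
  ((ℓ : ℝ) ^ 2)⁻¹ * ∑ j ∈ Finset.Ico 1 ℓ, ‖F (j / ℓ)‖ ^ 2

/-- A good weight: `w_H` is uniformly bounded as `H → ∞` and
`L²_ℓ(ŵ_H) ≪ H/ℓ` for all `ℓ ≥ 1`. -/
def GoodWeight (w : ℝ → ℝ) : Prop :=
  (∃ B : ℝ, ∀ (H : ℕ) (h : ℤ), |wH w H h| ≤ B) ∧
    ∃ C : ℝ, ∀ H ℓ : ℕ, 1 ≤ H → 1 ≤ ℓ → Ltwo (wHat w H) ℓ ≤ C * H / ℓ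

/-- `∑_{n ∼ N, n ≡ a (mod q)} f(n)`. -/
def bandSum (f : ℕ → ℝ) (N q : ℕ) (a : ℤ) : ℝ :=
  ∑ n ∈ (Finset.Ioc N (2 * N)).filter (fun (n : ℕ) => (n : ℤ) % q = a % q), f n

/-- `T_{w,f}(q,N,H) = ∑_{0≤|a|≤H} w(a) ∑_{n∼N, n≡a (q)} f(n) − (ŵ_H(0)/q) ∑_{n∼N} f(n)`. -/
def Twf (w : ℝ → ℝ) (f : ℕ → ℝ) (q N H : ℕ) : ℝ :=
  (∑ a ∈ Finset.Icc (-(H : ℤ)) (H : ℤ), w a * bandSum f N q a) -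
    wHat0 w H * (∑ n ∈ Finset.Ioc N (2 * N), f n) / q

/-- `T_{W,f}(q,N,H) = ∑_a W_H(a) ∑_{n∼N, n≡a (q)} f(n) − (Ŵ_H(0)/q) ∑_{n∼N} f(n)`. -/
def TWf (w : ℝ → ℝ) (f : ℕ → ℝ) (q N H : ℕ) : ℝ :=
  (∑ a ∈ Finset.Icc (-(2 * H : ℤ)) (2 * H : ℤ), WHcorr w H a * bandSum f N q a) -
    WHat0 w H * (∑ n ∈ Finset.Ioc N (2 * N), f n) / q

/-- `T_f(q,N,H) = ∑_{1≤a≤H} ∑_{n∼N, n≡a (q)} f(n) − (H/q) ∑_{n∼N} f(n)`. -/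
def Tf (f : ℕ → ℝ) (q N H : ℕ) : ℝ :=
  (∑ a ∈ Finset.Icc 1 H, bandSum f N q (a : ℤ)) -
    (H : ℝ) * (∑ n ∈ Finset.Ioc N (2 * N), f n) / q

/-- The first Ramanujan coefficient `R_1(f) = ∑_{d ≤ Q} g(d)/d`. -/
def Rcoef1 (g : ℕ → ℝ) (Q : ℕ) : ℝ := ∑ d ∈ Finset.Icc 1 Q, g d / d

/-- The `ℓ`-th Ramanujan coefficient `R_ℓ(f) = ∑_{d ≤ Q, ℓ ∣ d} g(d)/d`. -/
def Rcoef (g : ℕ → ℝ) (Q ℓ : ℕ) : ℝ :=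
  ∑ d ∈ (Finset.Icc 1 Q).filter (fun d => ℓ ∣ d), g d / d

/-- The short weighted sum `∑_n w_H(n−x) f(n)`. -/
def shortSum (w : ℝ → ℝ) (H : ℕ) (f : ℕ → ℝ) (x : ℕ) : ℝ :=
  ∑ n ∈ Finset.Icc 1 (x + H), wH w H ((n : ℤ) - (x : ℤ)) * f n

/-- The mixed weighted Selberg integral
`J_{w,(f₁,f₂)}(N,H) = ∑_{x∼N} ∏_j (∑_n w_H(n−x) f_j(n) − ŵ_H(0) R_1(f_j))`,
where `r_j = R_1(f_j)`. -/
def Jmix (w : ℝ → ℝ) (f₁ f₂ : ℕ → ℝ) (r₁ r₂ : ℝ) (N H : ℕ) : ℝ :=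
  ∑ x ∈ Finset.Ioc N (2 * N),
    (shortSum w H f₁ x - wHat0 w H * r₁) * (shortSum w H f₂ x - wHat0 w H * r₂)

/-- The Selberg integral `J_f(N,H) = ∑_{x∼N} |∑_{x<n≤x+H} f(n) − R_1(f) H|²`,
where `r = R_1(f)`. -/
def Jf (f : ℕ → ℝ) (r : ℝ) (N H : ℕ) : ℝ :=
  ∑ x ∈ Finset.Ioc N (2 * N), ((∑ n ∈ Finset.Ioc x (x + H), f n) - r * H) ^ 2

/-- The correlation `C_{f₁,f₂}(a) = ∑_{n∼N} f₁(n) f₂(n−a)` of the sieve functions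
attached to `g₁, g₂` of ranges `Q₁, Q₂`. -/
def corrFn (g₁ g₂ : ℕ → ℝ) (Q₁ Q₂ N : ℕ) (a : ℤ) : ℝ :=
  ∑ n ∈ Finset.Ioc N (2 * N), sieveFn g₁ Q₁ n * sieveZ g₂ Q₂ ((n : ℤ) - a)

/-- The unit step weight `u`. -/
def ustep : ℝ → ℝ := fun x => if 0 < x then 1 else 0

/-- The Cesàro weight `C_H`. -/
def cesaro (H : ℕ) : ℝ → ℝ := fun x => if |x| ≤ (H : ℝ) then 1 - |x| / H else 0

/-- Goldston's truncated divisor sum `Λ_R(n) = ∑_{d∣n, d≤R} μ(d) log(R/d)`. -/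
def LambdaR (R : ℕ) (n : ℕ) : ℝ :=
  ∑ d ∈ n.divisors.filter (fun d => d ≤ R),
    ((ArithmeticFunction.moebius d : ℤ) : ℝ) * Real.log ((R : ℝ) / d)

/-- Goldston's truncated divisor sum at integer arguments. -/
def LambdaRZ (R : ℕ) (m : ℤ) : ℝ :=
  ∑ d ∈ Finset.Icc 1 R,
    if (d : ℤ) ∣ m then ((ArithmeticFunction.moebius d : ℤ) : ℝ) * Real.log ((R : ℝ) / d) else 0


lemma count_lemma (N L : ℕ) (hL : 0 < L) (x : ℤ) :
    |((((Finset.Ioc N (2*N)).filter (fun (n:ℕ) => (L:ℤ) ∣ (n:ℤ) - x)).card : ℝ)) - (N:ℝ)/(L:ℝ)| ≤ 1 := by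
  have hL' : (0:ℤ) < L := by exact_mod_cast hL
  set v : ℤ := ((N:ℤ) - x) / L with hv
  set u : ℤ := ((2*(N:ℤ)) - x) / L with hu
  have hcard : ((Finset.Ioc N (2*N)).filter (fun (n:ℕ) => (L:ℤ) ∣ (n:ℤ) - x)).card
      = (Finset.Ioc v u).card := by
    refine Finset.card_bij (fun n _ => ((n:ℤ) - x) / L) ?_ ?_ ?_
    · intro n hn
      simp only [Finset.mem_filter, Finset.mem_Ioc] at hn ⊢
      obtain ⟨⟨h1, h2⟩, j, hj⟩ := hn
      rw [hj, Int.mul_ediv_cancel_left _ hL'.ne']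
      constructor
      · rw [hv, Int.ediv_lt_iff_lt_mul hL']
        have h3 : (N:ℤ) < n := by exact_mod_cast h1
        have h4 : (L:ℤ)*j = j*L := mul_comm _ _
        omega
      · rw [hu, Int.le_ediv_iff_mul_le hL']
        have h3 : (n:ℤ) ≤ 2*N := by exact_mod_cast h2
        have h4 : (L:ℤ)*j = j*L := mul_comm _ _
        omega
    · intro n₁ h₁ n₂ h₂ hyp
      simp only [Finset.mem_filter, Finset.mem_Ioc] at h₁ h₂
      have e₁ := Int.ediv_mul_cancel h₁.2
      have e₂ := Int.ediv_mul_cancel h₂.2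
      have : (n₁:ℤ) = n₂ := by
        have := congrArg (· * (L:ℤ)) hyp
        omega
      exact_mod_cast this
    · intro j hj
      simp only [Finset.mem_Ioc] at hj
      have h1 : (N:ℤ) - x < j * L := by rw [← Int.ediv_lt_iff_lt_mul hL']; exact hj.1
      have h2 : j * L ≤ 2*(N:ℤ) - x := by rw [← Int.le_ediv_iff_mul_le hL']; exact hj.2
      have hpos : 0 ≤ x + j * L := by omega
      refine ⟨(x + j * L).toNat, ?_, ?_⟩
      · simp only [Finset.mem_filter, Finset.mem_Ioc]
        have hc : ((x + j * L).toNat : ℤ) = x + j * L := Int.toNat_of_nonneg hpos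
        refine ⟨⟨?_, ?_⟩, ?_⟩
        · omega
        · omega
        · rw [hc]; exact ⟨j, by ring⟩
      · have hc : (((x + j * L).toNat : ℕ) : ℤ) = x + j * L := Int.toNat_of_nonneg hpos
        simp only [hc]
        rw [show x + j * L - x = j * L by ring, Int.mul_ediv_cancel _ hL'.ne']
  rw [hcard, Int.card_Ioc]
  have hr1 := Int.emod_nonneg ((N:ℤ) - x) hL'.ne'
  have hr2 := Int.emod_nonneg ((2*(N:ℤ)) - x) hL'.ne'
  have hr1' := Int.emod_lt_of_pos ((N:ℤ) - x) hL'
  have hr2' := Int.emod_lt_of_pos ((2*(N:ℤ)) - x) hL'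
  have e1 := Int.mul_ediv_add_emod ((N:ℤ) - x) L
  have e2 := Int.mul_ediv_add_emod ((2*(N:ℤ)) - x) L
  have hmul : (L:ℤ) * (u - v) = L * u - L * v := by ring
  have key : (L:ℤ) * (u - v) - N = ((N:ℤ) - x) % L - ((2*(N:ℤ)) - x) % L := by
    rw [hu, hv] at hmul ⊢; omega
  have hnn : 0 ≤ u - v := by
    by_contra h
    push_neg at h
    have h1 : u - v ≤ -1 := by omega
    have : (L:ℤ) * (u - v) ≤ L * (-1) := mul_le_mul_of_nonneg_left h1 hL'.le
    omega
  have htn : ((u - v).toNat : ℤ) = u - v := Int.toNat_of_nonneg hnn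
  have habs : |(L:ℤ) * (u - v) - N| ≤ L := by rw [abs_le]; omega
  have habsR : |(L:ℝ) * ((u - v : ℤ):ℝ) - (N:ℝ)| ≤ (L:ℝ) := by exact_mod_cast habs
  have hLR : (0:ℝ) < L := by exact_mod_cast hL
  have hcast : (((u - v).toNat : ℕ) : ℝ) = ((u - v : ℤ) : ℝ) := by exact_mod_cast htn
  have heq : (((u - v).toNat : ℕ):ℝ) - (N:ℝ)/L = ((L:ℝ) * ((u - v : ℤ):ℝ) - N)/L := by
    rw [hcast]; field_simp
  rw [heq, abs_div, abs_of_pos hLR]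
  exact div_le_one_of_le₀ habsR hLR.le

lemma sieveFn_eq (g : ℕ → ℝ) (Q n : ℕ) (hn : 0 < n) :
    sieveFn g Q n = ∑ d ∈ Finset.Icc 1 Q, if d ∣ n then g d else 0 := by
  rw [sieveFn, ← Finset.sum_filter]
  congr 1
  ext d
  simp only [Finset.mem_filter, Nat.mem_divisors, Finset.mem_Icc]
  constructor
  · rintro ⟨⟨hd, -⟩, hdQ⟩
    exact ⟨⟨Nat.pos_of_dvd_of_pos hd hn, hdQ⟩, hd⟩
  · rintro ⟨⟨h1, h2⟩, hd⟩
    exact ⟨⟨hd, hn.ne'⟩, h2⟩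

lemma exists_crt (d q a : ℕ) (h : Nat.gcd d q ∣ a) :
    ∃ x : ℤ, (d:ℤ) ∣ x ∧ (q:ℤ) ∣ x - a := by
  obtain ⟨a', ha⟩ := h
  have ha' : (a:ℤ) = (Nat.gcd d q : ℤ) * a' := by exact_mod_cast ha
  refine ⟨(a':ℤ) * ((d:ℤ) * Nat.gcdA d q), ⟨(a':ℤ) * Nat.gcdA d q, by ring⟩,
    ⟨-((a':ℤ) * Nat.gcdB d q), ?_⟩⟩
  rw [ha', Nat.gcd_eq_gcd_ab]
  ring

lemma int_lcm_cast (d q : ℕ) : (Int.lcm (d:ℤ) (q:ℤ) : ℤ) = ((Nat.lcm d q : ℕ) : ℤ) := by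
  simp [Int.lcm]

/-- for `f = g_Q ∗ 1` of range `Q ≪ N` and all positive integers `a, q`,
`∑_{n∼N, n≡a (q)} f(n) = (N/q) ∑_{d≤Q, (d,q)∣a} (g(d)/d)·(d,q) + O_ε(Q^{1+ε})`. -/
theorem statement6 (A : ℝ) (hA : 0 < A) (Cg : ℝ → ℝ) (ε : ℝ) (hε : 0 < ε) :
    ∃ C : ℝ, 0 < C ∧ ∀ (N Q a q : ℕ) (g : ℕ → ℝ),
      0 < N → 0 < Q → 0 < a → 0 < q →
      (Q : ℝ) ≤ A * N →
      EssBddWith Cg g → SuppIn g Q →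
      |bandSum (sieveFn g Q) N q (a : ℤ) -
          (N : ℝ) / q * ∑ d ∈ (Finset.Icc 1 Q).filter (fun d => Nat.gcd d q ∣ a),
            g d / d * Nat.gcd d q| ≤ C * (Q : ℝ) ^ (1 + ε) := by
  refine ⟨|Cg ε| + 1, by positivity, ?_⟩
  intro N Q a q g hN hQ ha hq hQN hbdd hsupp
  have hq' : (0:ℤ) < q := by exact_mod_cast hq
  set S := (Finset.Ioc N (2*N)).filter (fun (n:ℕ) => (n:ℤ) % q = ((a:ℕ):ℤ) % q) with hS
  -- Step 1 : rewrite bandSum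
  have step1 : bandSum (sieveFn g Q) N q (a:ℤ) =
      ∑ d ∈ Finset.Icc 1 Q, g d * ((S.filter (fun n => d ∣ n)).card : ℝ) := by
    rw [bandSum]
    calc (∑ n ∈ S, sieveFn g Q n)
        = ∑ n ∈ S, ∑ d ∈ Finset.Icc 1 Q, if d ∣ n then g d else 0 := by
          refine Finset.sum_congr rfl fun n hn => sieveFn_eq g Q n ?_
          have hn' := (Finset.mem_filter.mp hn).1
          have := (Finset.mem_Ioc.mp hn').1
          omega
      _ = ∑ d ∈ Finset.Icc 1 Q, ∑ n ∈ S, if d ∣ n then g d else 0 := Finset.sum_comm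
      _ = ∑ d ∈ Finset.Icc 1 Q, g d * ((S.filter (fun n => d ∣ n)).card : ℝ) := by
          refine Finset.sum_congr rfl fun d _ => ?_
          rw [← Finset.sum_filter, Finset.sum_const, nsmul_eq_mul, mul_comm]
  -- Step 2 : rewrite the main term
  have step2 : (N:ℝ) / q * ∑ d ∈ (Finset.Icc 1 Q).filter (fun d => Nat.gcd d q ∣ a),
        g d / d * Nat.gcd d q
      = ∑ d ∈ Finset.Icc 1 Q,
          if Nat.gcd d q ∣ a then (N:ℝ)/q * (g d / d * Nat.gcd d q) else 0 := by
    rw [Finset.mul_sum, Finset.sum_filter]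
  rw [step1, step2, ← Finset.sum_sub_distrib]
  -- termwise bound
  have hterm : ∀ d ∈ Finset.Icc 1 Q,
      |g d * ((S.filter (fun n => d ∣ n)).card : ℝ) -
        (if Nat.gcd d q ∣ a then (N:ℝ)/q * (g d / d * Nat.gcd d q) else 0)| ≤ |g d| := by
    intro d hd
    simp only [Finset.mem_Icc] at hd
    have hd1 : 0 < d := hd.1
    have hd1' : (0:ℝ) < d := by exact_mod_cast hd1
    have hqR : (0:ℝ) < q := by exact_mod_cast hq
    by_cases hm : Nat.gcd d q ∣ a
    · rw [if_pos hm]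
      obtain ⟨x, hdx, hqx⟩ := exists_crt d q a hm
      have hLpos : 0 < Nat.lcm d q := Nat.lcm_pos hd1 hq
      have hLR : (0:ℝ) < Nat.lcm d q := by exact_mod_cast hLpos
      have hfilter : S.filter (fun n => d ∣ n)
          = (Finset.Ioc N (2*N)).filter (fun (n:ℕ) => ((Nat.lcm d q : ℕ):ℤ) ∣ (n:ℤ) - x) := by
        rw [hS, Finset.filter_filter]
        ext n
        simp only [Finset.mem_filter, Finset.mem_Ioc]
        constructor
        · rintro ⟨hn, hmod, hdn⟩
          refine ⟨hn, ?_⟩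
          have h5 : (q:ℤ) ∣ (a:ℤ) - n := Int.ModEq.dvd hmod
          have hqnx : (q:ℤ) ∣ (n:ℤ) - x := by
            obtain ⟨k, hk⟩ := h5
            obtain ⟨k', hk'⟩ := hqx
            exact ⟨-(k + k'), by linear_combination (-1:ℤ)*hk - hk'⟩
          have hdnx : (d:ℤ) ∣ (n:ℤ) - x :=
            dvd_sub (Int.natCast_dvd_natCast.mpr hdn) hdx
          have := Int.coe_lcm_dvd hdnx hqnx
          rwa [int_lcm_cast] at this
        · rintro ⟨hn, hL⟩
          refine ⟨hn, ?_, ?_⟩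
          · -- mod condition
            have hqL : (q:ℤ) ∣ ((Nat.lcm d q : ℕ):ℤ) :=
              Int.natCast_dvd_natCast.mpr (Nat.dvd_lcm_right d q)
            have h1 : (q:ℤ) ∣ (n:ℤ) - x := hqL.trans hL
            have h2 : (q:ℤ) ∣ (n:ℤ) - a := by
              obtain ⟨k, hk⟩ := h1
              obtain ⟨k', hk'⟩ := hqx
              exact ⟨k + k', by linear_combination hk + hk'⟩
            have h2' : (q:ℤ) ∣ (a:ℤ) - n := by
              obtain ⟨k, hk⟩ := h2
              exact ⟨-k, by linear_combination (-1:ℤ)*hk⟩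
            exact Int.modEq_iff_dvd.mpr h2'
          · have hdL : (d:ℤ) ∣ ((Nat.lcm d q : ℕ):ℤ) :=
              Int.natCast_dvd_natCast.mpr (Nat.dvd_lcm_left d q)
            have h1 : (d:ℤ) ∣ (n:ℤ) - x := hdL.trans hL
            have h2 : (d:ℤ) ∣ (n:ℤ) := by
              have := dvd_add h1 hdx
              simpa using this
            exact_mod_cast h2
      have hcount := count_lemma N (Nat.lcm d q) hLpos x
      rw [← hfilter] at hcount
      have hml : (Nat.gcd d q : ℝ) * (Nat.lcm d q : ℝ) = (d:ℝ) * q := by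
        exact_mod_cast Nat.gcd_mul_lcm d q
      have hmain : (N:ℝ)/q * (g d / d * Nat.gcd d q) = g d * ((N:ℝ)/(Nat.lcm d q)) := by
        field_simp
        linear_combination (g d) * hml
      rw [hmain, ← mul_sub, abs_mul]
      calc |g d| * |((S.filter (fun n => d ∣ n)).card : ℝ) - (N:ℝ)/(Nat.lcm d q)|
          ≤ |g d| * 1 := mul_le_mul_of_nonneg_left hcount (abs_nonneg _)
        _ = |g d| := mul_one _
    · rw [if_neg hm, sub_zero]
      have hempty : S.filter (fun n => d ∣ n) = ∅ := by
        rw [hS, Finset.filter_filter, Finset.filter_eq_empty_iff]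
        rintro n hn ⟨hmod, hdn⟩
        apply hm
        have h5 : (q:ℤ) ∣ (a:ℤ) - n := Int.ModEq.dvd hmod
        have hmq : ((Nat.gcd d q : ℕ):ℤ) ∣ (q:ℤ) := Int.natCast_dvd_natCast.mpr (Nat.gcd_dvd_right d q)
        have hmd : ((Nat.gcd d q : ℕ):ℤ) ∣ (d:ℤ) := Int.natCast_dvd_natCast.mpr (Nat.gcd_dvd_left d q)
        have h6 : ((Nat.gcd d q : ℕ):ℤ) ∣ (a:ℤ) - n := hmq.trans h5
        have h7 : ((Nat.gcd d q : ℕ):ℤ) ∣ (n:ℤ) := hmd.trans (Int.natCast_dvd_natCast.mpr hdn)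
        have h8 : ((Nat.gcd d q : ℕ):ℤ) ∣ (a:ℤ) := by
          have := dvd_add h6 h7
          simpa using this
        exact_mod_cast h8
      rw [hempty]
      simp
  -- sum up
  calc |∑ d ∈ Finset.Icc 1 Q, (g d * ((S.filter (fun n => d ∣ n)).card : ℝ) -
          if Nat.gcd d q ∣ a then (N:ℝ)/q * (g d / d * Nat.gcd d q) else 0)|
      ≤ ∑ d ∈ Finset.Icc 1 Q, |g d * ((S.filter (fun n => d ∣ n)).card : ℝ) -
          if Nat.gcd d q ∣ a then (N:ℝ)/q * (g d / d * Nat.gcd d q) else 0| :=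
        Finset.abs_sum_le_sum_abs _ _
    _ ≤ ∑ d ∈ Finset.Icc 1 Q, |g d| := Finset.sum_le_sum hterm
    _ ≤ ∑ d ∈ Finset.Icc 1 Q, Cg ε * (Q:ℝ)^ε := by
        refine Finset.sum_le_sum fun d hd => ?_
        simp only [Finset.mem_Icc] at hd
        have h1 := hbdd ε hε d hd.1
        have hC0 : 0 ≤ Cg ε := by
          have := hbdd ε hε 1 le_rfl
          simpa [Real.one_rpow] using (abs_nonneg (g 1)).trans this
        refine h1.trans ?_
        have hdq : ((d:ℝ))^ε ≤ (Q:ℝ)^ε :=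
          Real.rpow_le_rpow (by positivity) (by exact_mod_cast hd.2) hε.le
        exact mul_le_mul_of_nonneg_left hdq hC0
    _ ≤ (|Cg ε| + 1) * (Q:ℝ)^(1+ε) := by
        rw [Finset.sum_const, Nat.card_Icc, nsmul_eq_mul]
        have hQR : (0:ℝ) < Q := by exact_mod_cast hQ
        have hpow : (Q:ℝ)^(1+ε) = Q * (Q:ℝ)^ε := by
          rw [Real.rpow_add hQR, Real.rpow_one]
        rw [hpow]
        have h1 : Cg ε ≤ |Cg ε| + 1 := (le_abs_self _).trans (by linarith)
        have h2 : (0:ℝ) ≤ (Q:ℝ)^ε := Real.rpow_nonneg hQR.le ε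
        simp only [Nat.add_sub_cancel]
        calc (Q:ℝ) * (Cg ε * (Q:ℝ)^ε) = Cg ε * ((Q:ℝ) * (Q:ℝ)^ε) := by ring
          _ ≤ (|Cg ε| + 1) * ((Q:ℝ) * (Q:ℝ)^ε) :=
              mul_le_mul_of_nonneg_right h1 (mul_nonneg hQR.le h2)

end
end

section
/- Let f be a sieve function of range Q ≪ N, with Q, N positive integers. Then for every integer ℓ > 1 and every j with 1 ≤ j ≤ ℓ and (j,ℓ) = 1, the exponential sum f̂(j/ℓ) := ∑_{n∼N} f(n) e(nj/ℓ) satisfies f̂(j/ℓ) = R_ℓ(f)·N + O_ε((ℓQ)^ε (Q + ℓ)), uniformly in j ∈ ℤ_ℓ^*. -/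
open Finset
open scoped Classical

noncomputable section

lemma norm_expi (θ : ℝ) : ‖expi θ‖ = 1 := by
  simp [expi, Complex.norm_exp]

lemma expi_add (a b : ℝ) : expi (a + b) = expi a * expi b := by
  rw [expi, expi, expi, ← Complex.exp_add]; push_cast; ring_nf

lemma expi_int (k : ℤ) : expi k = 1 := by
  rw [expi, show (2 * Real.pi * Complex.I * (k:ℝ) : ℂ) = k * (2 * Real.pi * Complex.I) by push_cast; ring]
  exact Complex.exp_int_mul_two_pi_mul_I k

lemma expi_nat (k : ℕ) : expi k = 1 := by simpa using expi_int (k : ℤ)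

lemma expi_nat_mul (m : ℕ) (θ : ℝ) : expi (m * θ) = expi θ ^ m := by
  rw [expi, expi, ← Complex.exp_nat_mul]
  push_cast; ring_nf

lemma norm_expi_sub_one (θ : ℝ) : ‖expi θ - 1‖ = 2 * |Real.sin (Real.pi * θ)| := by
  set x : ℝ := Real.pi * θ with hx
  have h : expi θ - 1 = Complex.exp ((x:ℂ) * Complex.I) * (2 * Complex.I * ((Real.sin x : ℝ) : ℂ)) := by
    rw [Complex.ofReal_sin, Complex.sin]
    set E := Complex.exp ((x:ℂ) * Complex.I) with hE
    set F := Complex.exp (-(x:ℂ) * Complex.I) with hF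
    have hEF : E * F = 1 := by
      rw [hE, hF, ← Complex.exp_add]
      ring_nf
      exact Complex.exp_zero
    have hEE : E * E = expi θ := by
      rw [hE, ← Complex.exp_add, expi, hx]
      push_cast; ring_nf
    linear_combination (-1 : ℂ) * hEE + hEF + (E^2 - E*F) * Complex.I_sq
  rw [h, norm_mul]
  have : ‖Complex.exp ((x:ℂ) * Complex.I)‖ = 1 := by
    simp [Complex.norm_exp]
  rw [this, one_mul, norm_mul, norm_mul]
  simp [Complex.norm_real, ← Complex.ofReal_sin]

lemma geom_bound (z : ℂ) (hz : ‖z‖ = 1) (h1 : z ≠ 1) (a b : ℕ) :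
    ‖∑ m ∈ Finset.Ioc a b, z ^ m‖ ≤ 2 / ‖z - 1‖ := by
  have hz1 : (0:ℝ) < ‖z - 1‖ := by
    simp only [norm_pos_iff, sub_ne_zero]; exact h1
  have key : ∑ m ∈ Finset.Ioc a b, z ^ m = z ^ (a+1) * ((z ^ (b-a) - 1) / (z - 1)) := by
    have : Finset.Ioc a b = Finset.Ico (a+1) (b+1) := by
      ext m; simp [Nat.lt_succ_iff, Nat.succ_le_iff]
    rw [this, Finset.sum_Ico_eq_sum_range]
    have hn : b + 1 - (a + 1) = b - a := by omega
    rw [hn, ← geom_sum_eq h1, Finset.mul_sum]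
    exact Finset.sum_congr rfl fun i _ => by rw [← pow_add]
  rw [key, norm_mul, norm_div, norm_pow, hz, one_pow, one_mul]
  gcongr
  calc ‖z ^ (b-a) - 1‖ ≤ ‖z ^ (b-a)‖ + ‖(1:ℂ)‖ := norm_sub_le _ _
    _ ≤ 2 := by rw [norm_pow, hz, one_pow, norm_one]; norm_num

lemma sin_lower (ℓ s : ℕ) (h1 : 1 ≤ s) (h2 : s < ℓ) :
    2 * min (s:ℝ) ((ℓ:ℝ) - s) / ℓ ≤ Real.sin (Real.pi * (s / ℓ)) := by
  have hl : (0:ℝ) < ℓ := by exact_mod_cast (by omega : 0 < ℓ)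
  have hs0 : (0:ℝ) < s := by exact_mod_cast h1
  have hsl : (s:ℝ) < ℓ := by exact_mod_cast h2
  have hpi := Real.pi_pos
  rcases le_or_gt (2 * (s:ℝ)) ℓ with h | h
  · rw [min_eq_left (by linarith)]
    have hx1 : (0:ℝ) ≤ Real.pi * (s / ℓ) := by positivity
    have hx2 : Real.pi * ((s:ℝ) / ℓ) ≤ Real.pi / 2 := by
      have : (s:ℝ)/ℓ ≤ 1/2 := by rw [div_le_div_iff₀ hl (by norm_num)]; linarith
      nlinarith
    have := Real.mul_le_sin hx1 hx2
    calc 2 * (s:ℝ) / ℓ = 2 / Real.pi * (Real.pi * (s / ℓ)) := by field_simp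
      _ ≤ _ := this
  · rw [min_eq_right (by linarith)]
    have hsin : Real.sin (Real.pi * ((s:ℝ) / ℓ)) = Real.sin (Real.pi * (((ℓ:ℝ) - s) / ℓ)) := by
      rw [← Real.sin_pi_sub]
      congr 1
      field_simp
    rw [hsin]
    have hx1 : (0:ℝ) ≤ Real.pi * (((ℓ:ℝ) - s) / ℓ) := by
      apply mul_nonneg hpi.le
      apply div_nonneg (by linarith) hl.le
    have hx2 : Real.pi * (((ℓ:ℝ) - s) / ℓ) ≤ Real.pi / 2 := by
      have : ((ℓ:ℝ) - s)/ℓ ≤ 1/2 := by rw [div_le_div_iff₀ hl (by norm_num)]; linarith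
      nlinarith
    have := Real.mul_le_sin hx1 hx2
    calc 2 * ((ℓ:ℝ) - s) / ℓ = 2 / Real.pi * (Real.pi * (((ℓ:ℝ) - s) / ℓ)) := by
          field_simp
      _ ≤ _ := this

lemma sum_inv_le (n : ℕ) : ∑ s ∈ Finset.Ico 1 n, (1:ℝ)/s ≤ 1 + Real.log n := by
  rcases n with _ | m
  · simp
  rcases m with _ | k
  · simp
  have key : ∑ s ∈ Finset.Ico 1 (k+2), (1:ℝ)/s = (harmonic (k+1) : ℝ) := by
    rw [Finset.sum_Ico_eq_sum_range]
    simp only [harmonic]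
    push_cast
    refine Finset.sum_congr (by norm_num) fun i _ => by rw [one_div, add_comm]
  rw [key]
  refine (harmonic_le_one_add_log _).trans ?_
  have : Real.log (k+1 : ℕ) ≤ Real.log ((k+2 : ℕ) : ℝ) := by
    apply Real.log_le_log (by positivity)
    push_cast; linarith
  have h2 : ((k:ℝ)+1+1) = ((k:ℝ)+2) := by ring
  push_cast
  rw [h2]
  push_cast at this
  linarith

lemma fiber_card (Q ℓ j s : ℕ) (hcop : Nat.Coprime j ℓ) :
    ((Finset.Icc 1 Q).filter (fun d => d * j % ℓ = s)).card ≤ Q / ℓ + 1 := by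
  classical
  have := Finset.card_le_card_of_injOn (s := (Finset.Icc 1 Q).filter (fun d => d * j % ℓ = s))
    (t := Finset.range (Q / ℓ + 1)) (fun d => d / ℓ) ?_ ?_
  · simpa using this
  · intro d hd
    simp only [Finset.coe_filter, Finset.mem_filter, Set.mem_setOf_eq, Finset.mem_Icc] at hd
    simp only [Finset.coe_range, Set.mem_Iio, Finset.mem_coe, Finset.mem_range, Nat.lt_succ_iff]
    exact Nat.div_le_div_right hd.1.2
  · intro d1 h1 d2 h2 hdiv
    simp only [Finset.coe_filter, Set.mem_setOf_eq, Finset.mem_Icc] at h1 h2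
    have hmod : d1 % ℓ = d2 % ℓ := by
      have : d1 * j ≡ d2 * j [MOD ℓ] := by
        unfold Nat.ModEq; rw [h1.2, h2.2]
      exact Nat.ModEq.cancel_right_of_coprime hcop.symm this
    simp only at hdiv
    calc d1 = ℓ * (d1/ℓ) + d1 % ℓ := (Nat.div_add_mod d1 ℓ).symm
      _ = ℓ * (d2/ℓ) + d2 % ℓ := by rw [hdiv, hmod]
      _ = d2 := Nat.div_add_mod d2 ℓ

lemma Bsum_le (ℓ : ℕ) (hl : 1 < ℓ) :
    ∑ s ∈ Finset.Ico 1 ℓ, (ℓ:ℝ)/(2 * min (s:ℝ) ((ℓ:ℝ)-s)) ≤ ℓ * (1 + Real.log ℓ) := by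
  have hl0 : (0:ℝ) < ℓ := by exact_mod_cast (by omega : 0 < ℓ)
  have step : ∀ s ∈ Finset.Ico 1 ℓ,
      (ℓ:ℝ)/(2 * min (s:ℝ) ((ℓ:ℝ)-s)) ≤ (ℓ:ℝ)/2 * (1/s + 1/((ℓ:ℝ)-s)) := by
    intro s hs
    simp only [Finset.mem_Ico] at hs
    have hs0 : (0:ℝ) < s := by exact_mod_cast hs.1
    have hsl : (s:ℝ) < ℓ := by exact_mod_cast hs.2
    have h1 : (0:ℝ) < (ℓ:ℝ)-s := by linarith
    rw [mul_add]
    rcases le_total (s:ℝ) ((ℓ:ℝ)-s) with h | h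
    · rw [min_eq_left h]
      have e : (ℓ:ℝ)/(2*s) = (ℓ:ℝ)/2 * (1/s) := by
        rw [div_mul_div_comm, mul_one]
      rw [e]
      have : (0:ℝ) ≤ (ℓ:ℝ)/2 * (1/((ℓ:ℝ)-s)) := by positivity
      linarith
    · rw [min_eq_right h]
      have e : (ℓ:ℝ)/(2*((ℓ:ℝ)-s)) = (ℓ:ℝ)/2 * (1/((ℓ:ℝ)-s)) := by
        rw [div_mul_div_comm, mul_one]
      rw [e]
      have : (0:ℝ) ≤ (ℓ:ℝ)/2 * (1/(s:ℝ)) := by positivity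
      linarith
  calc ∑ s ∈ Finset.Ico 1 ℓ, (ℓ:ℝ)/(2 * min (s:ℝ) ((ℓ:ℝ)-s))
      ≤ ∑ s ∈ Finset.Ico 1 ℓ, (ℓ:ℝ)/2 * (1/s + 1/((ℓ:ℝ)-s)) := Finset.sum_le_sum step
    _ = (ℓ:ℝ)/2 * (∑ s ∈ Finset.Ico 1 ℓ, (1:ℝ)/s + ∑ s ∈ Finset.Ico 1 ℓ, 1/((ℓ:ℝ)-s)) := by
        rw [← Finset.mul_sum, ← Finset.sum_add_distrib]
    _ = (ℓ:ℝ)/2 * (∑ s ∈ Finset.Ico 1 ℓ, (1:ℝ)/s + ∑ s ∈ Finset.Ico 1 ℓ, (1:ℝ)/s) := by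
        congr 2
        refine Finset.sum_nbij' (i := fun s => ℓ - s) (j := fun s => ℓ - s) ?_ ?_ ?_ ?_ ?_
        · intro s hs; simp only [Finset.mem_Ico] at *; omega
        · intro s hs; simp only [Finset.mem_Ico] at *; omega
        · intro s hs; simp only [Finset.mem_Ico] at *; omega
        · intro s hs; simp only [Finset.mem_Ico] at *; omega
        · intro s hs
          simp only [Finset.mem_Ico] at hs
          have : ((ℓ - s : ℕ) : ℝ) = (ℓ:ℝ) - s := by
            push_cast [Nat.cast_sub hs.2.le]; ring
          rw [this]
    _ ≤ (ℓ:ℝ)/2 * ((1 + Real.log ℓ) + (1 + Real.log ℓ)) := by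
        have := sum_inv_le ℓ
        gcongr
    _ = ℓ * (1 + Real.log ℓ) := by ring

lemma group_bound (Q ℓ j : ℕ) (hl : 1 < ℓ) (hcop : Nat.Coprime j ℓ) (B : ℕ → ℝ)
    (hB : ∀ s ∈ Finset.Ico 1 ℓ, 0 ≤ B s) :
    ∑ d ∈ (Finset.Icc 1 Q).filter (fun d => ¬ ℓ ∣ d), B (d * j % ℓ)
      ≤ (↑(Q / ℓ) + 1 : ℝ) * ∑ s ∈ Finset.Ico 1 ℓ, B s := by
  classical
  have hmaps : ∀ d ∈ (Finset.Icc 1 Q).filter (fun d => ¬ ℓ ∣ d),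
      d * j % ℓ ∈ Finset.Ico 1 ℓ := by
    intro d hd
    simp only [Finset.mem_filter, Finset.mem_Icc] at hd
    simp only [Finset.mem_Ico]
    constructor
    · by_contra h
      push_neg at h
      interval_cases hmod : d * j % ℓ
      · have hdvd : ℓ ∣ d * j := Nat.dvd_of_mod_eq_zero hmod
        exact hd.2 ((Nat.Coprime.dvd_of_dvd_mul_right hcop.symm) hdvd)
    · exact Nat.mod_lt _ (by omega)
  rw [← Finset.sum_fiberwise_of_maps_to hmaps, Finset.mul_sum]
  apply Finset.sum_le_sum
  intro s hs
  have heq : ∑ d ∈ ((Finset.Icc 1 Q).filter (fun d => ¬ ℓ ∣ d)).filter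
      (fun d => d * j % ℓ = s), B (d * j % ℓ)
      = ∑ d ∈ ((Finset.Icc 1 Q).filter (fun d => ¬ ℓ ∣ d)).filter
      (fun d => d * j % ℓ = s), B s := by
    refine Finset.sum_congr rfl fun d hd => ?_
    simp only [Finset.mem_filter] at hd
    rw [hd.2]
  rw [heq, Finset.sum_const, nsmul_eq_mul]
  apply mul_le_mul_of_nonneg_right ?_ (hB s hs)
  have hsub : ((Finset.Icc 1 Q).filter (fun d => ¬ ℓ ∣ d)).filter (fun d => d * j % ℓ = s)
      ⊆ (Finset.Icc 1 Q).filter (fun d => d * j % ℓ = s) := by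
    intro d hd
    simp only [Finset.mem_filter] at *
    exact ⟨hd.1.1, hd.2⟩
  calc (↑(((Finset.Icc 1 Q).filter (fun d => ¬ ℓ ∣ d)).filter (fun d => d * j % ℓ = s)).card : ℝ)
      ≤ (↑((Finset.Icc 1 Q).filter (fun d => d * j % ℓ = s)).card : ℝ) := by
        exact_mod_cast Finset.card_le_card hsub
    _ ≤ ↑(Q / ℓ) + 1 := by exact_mod_cast fiber_card Q ℓ j s hcop

lemma cast_div_lt (a d : ℕ) (hd : 0 < d) : (a:ℝ)/d < ((a/d : ℕ):ℝ) + 1 := by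
  have h : a < d * (a/d) + d := by
    have h1 := Nat.div_add_mod a d
    have h2 := Nat.mod_lt a hd
    omega
  have hdR : (0:ℝ) < d := by exact_mod_cast hd
  rw [div_lt_iff₀ hdR]
  have h3 : (a:ℝ) < d * ((a/d:ℕ):ℝ) + d := by exact_mod_cast h
  nlinarith

/-- Lemma 1: for a sieve function `f` of range `Q ≪ N`, every `ℓ > 1` and
every `j ∈ ℤ_ℓ^*`, `f̂(j/ℓ) = R_ℓ(f)·N + O_ε((ℓQ)^ε (Q + ℓ))`, uniformly in `j`. -/
theorem statement8 (A : ℝ) (hA : 0 < A) (Cg : ℝ → ℝ) (ε : ℝ) (hε : 0 < ε) :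
    ∃ C : ℝ, 0 < C ∧ ∀ (N Q ℓ j : ℕ) (g : ℕ → ℝ),
      0 < N → 0 < Q → (Q : ℝ) ≤ A * N →
      1 < ℓ → 1 ≤ j → j ≤ ℓ → Nat.Coprime j ℓ →
      EssBddWith Cg g → SuppIn g Q →
      ‖(∑ n ∈ Finset.Ioc N (2 * N), (sieveFn g Q n : ℂ) * expi (n * j / ℓ)) -
          ((Rcoef g Q ℓ * N : ℝ) : ℂ)‖ ≤
        C * ((ℓ : ℝ) * Q) ^ ε * ((Q : ℝ) + ℓ) := by
  classical
  set G : ℝ := max (Cg ε) 0 with hGdef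
  have hG0 : 0 ≤ G := le_max_right _ _
  refine ⟨(G + 1) * (2 + 1/ε), by positivity, ?_⟩
  intro N Q ℓ j g hN hQ hQN hℓ hj1 hjℓ hcop hbdd hsupp
  have hℓ0 : 0 < ℓ := by omega
  have hℓR : (0:ℝ) < ℓ := by exact_mod_cast hℓ0
  have hQR : (0:ℝ) < Q := by exact_mod_cast hQ
  have hgle : ∀ d ∈ Finset.Icc 1 Q, |g d| ≤ G * (Q:ℝ) ^ ε := by
    intro d hd
    simp only [Finset.mem_Icc] at hd
    have h1 := hbdd ε hε d hd.1
    have h2 : Cg ε * (d:ℝ) ^ ε ≤ G * (d:ℝ) ^ ε :=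
      mul_le_mul_of_nonneg_right (le_max_left _ _) (Real.rpow_nonneg (by positivity) _)
    have h3 : G * (d:ℝ) ^ ε ≤ G * (Q:ℝ) ^ ε := by
      apply mul_le_mul_of_nonneg_left _ hG0
      exact Real.rpow_le_rpow (by positivity) (by exact_mod_cast hd.2) hε.le
    linarith
  -- Step A: open the sieve function and swap summations
  have stepA : ∑ n ∈ Finset.Ioc N (2 * N), (sieveFn g Q n : ℂ) * expi (n * j / ℓ)
      = ∑ d ∈ Finset.Icc 1 Q, (g d : ℂ) *
          ∑ m ∈ Finset.Ioc (N / d) (2 * N / d), expi (d * m * j / ℓ) := by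
    have hsieve : ∀ n ∈ Finset.Ioc N (2*N), (sieveFn g Q n : ℂ) * expi (n * j / ℓ)
        = ∑ d ∈ Finset.Icc 1 Q, if d ∣ n then (g d : ℂ) * expi (n * j / ℓ) else 0 := by
      intro n hn
      simp only [Finset.mem_Ioc] at hn
      have hn0 : n ≠ 0 := by omega
      have hset : n.divisors.filter (fun d => d ≤ Q)
          = (Finset.Icc 1 Q).filter (fun d => d ∣ n) := by
        ext d
        simp only [Finset.mem_filter, Nat.mem_divisors, Finset.mem_Icc]
        constructor
        · rintro ⟨⟨hdvd, _⟩, hdQ⟩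
          refine ⟨⟨?_, hdQ⟩, hdvd⟩
          rcases Nat.eq_zero_or_pos d with rfl | h
          · exact absurd (Nat.eq_zero_of_zero_dvd hdvd) hn0
          · exact h
        · rintro ⟨⟨_, hdQ⟩, hdvd⟩
          exact ⟨⟨hdvd, hn0⟩, hdQ⟩
      calc (sieveFn g Q n : ℂ) * expi (n * j / ℓ)
          = ∑ d ∈ (Finset.Icc 1 Q).filter (fun d => d ∣ n),
              (g d : ℂ) * expi (n * j / ℓ) := by
            unfold sieveFn
            rw [hset]
            push_cast
            rw [Finset.sum_mul]
        _ = _ := (Finset.sum_filter _ _)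
    rw [Finset.sum_congr rfl hsieve, Finset.sum_comm]
    refine Finset.sum_congr rfl fun d hd => ?_
    simp only [Finset.mem_Icc] at hd
    have hd0 : 0 < d := hd.1
    rw [← Finset.sum_filter, Finset.mul_sum]
    refine Finset.sum_nbij' (i := fun n => n / d) (j := fun m => d * m) ?_ ?_ ?_ ?_ ?_
    · intro n hn
      simp only [Finset.mem_filter, Finset.mem_Ioc] at hn ⊢
      exact ⟨Nat.div_lt_div_of_lt_of_dvd hn.2 hn.1.1, Nat.div_le_div_right hn.1.2⟩
    · intro m hm
      simp only [Finset.mem_filter, Finset.mem_Ioc] at hm ⊢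
      constructor
      · constructor
        · rw [Nat.div_lt_iff_lt_mul hd0] at hm
          rw [mul_comm]
          exact hm.1
        · rw [Nat.le_div_iff_mul_le hd0] at hm
          rw [mul_comm]
          exact hm.2
      · exact Dvd.intro m rfl
    · intro n hn
      simp only [Finset.mem_filter, Finset.mem_Ioc] at hn
      exact Nat.mul_div_cancel' hn.2
    · intro m hm
      exact Nat.mul_div_cancel_left m hd0
    · intro n hn
      simp only [Finset.mem_filter, Finset.mem_Ioc] at hn
      have hcast : ((d:ℝ) * ((n / d : ℕ) : ℝ)) = (n:ℝ) := by
        exact_mod_cast congrArg (Nat.cast : ℕ → ℝ) (Nat.mul_div_cancel' hn.2)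
      congr 2
      rw [hcast]
  -- split according to ℓ ∣ d
  set Dl := (Finset.Icc 1 Q).filter (fun d => ℓ ∣ d) with hDldef
  set Dn := (Finset.Icc 1 Q).filter (fun d => ¬ ℓ ∣ d) with hDndef
  set F : ℕ → ℂ := fun d => (g d : ℂ) *
      ∑ m ∈ Finset.Ioc (N / d) (2 * N / d), expi (d * m * j / ℓ) with hFdef
  have hsplit : ∑ d ∈ Finset.Icc 1 Q, F d = ∑ d ∈ Dl, F d + ∑ d ∈ Dn, F d :=
    (Finset.sum_filter_add_sum_filter_not _ _ _).symm
  -- the main-term part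
  have hS1 : ∑ d ∈ Dl, F d = ∑ d ∈ Dl, (g d : ℂ) * (((2*N/d - N/d : ℕ) : ℝ) : ℂ) := by
    refine Finset.sum_congr rfl fun d hd => ?_
    simp only [hDldef, Finset.mem_filter, Finset.mem_Icc] at hd
    obtain ⟨k, hk⟩ := hd.2
    rw [hFdef]
    simp only
    congr 1
    have hone : ∀ m ∈ Finset.Ioc (N/d) (2*N/d), expi ((d:ℝ) * m * j / ℓ) = 1 := by
      intro m _
      have harg : ((d:ℝ) * m * j / ℓ) = ((k * m * j : ℕ) : ℝ) := by
        subst hk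
        push_cast
        field_simp
      rw [harg]
      exact expi_nat _
    rw [Finset.sum_congr rfl hone, Finset.sum_const, Nat.card_Ioc]
    push_cast
    ring
  have hM : ((Rcoef g Q ℓ * N : ℝ) : ℂ) = ∑ d ∈ Dl, (g d : ℂ) * (((N:ℝ) / d : ℝ) : ℂ) := by
    unfold Rcoef
    rw [hDldef]
    push_cast
    rw [Finset.sum_mul]
    refine Finset.sum_congr rfl fun d hd => ?_
    ring
  have hE1 : ‖(∑ d ∈ Dl, F d) - ((Rcoef g Q ℓ * N : ℝ) : ℂ)‖ ≤ G * (Q:ℝ)^ε * Q := by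
    rw [hS1, hM, ← Finset.sum_sub_distrib]
    refine (norm_sum_le _ _).trans ?_
    have hterm : ∀ d ∈ Dl,
        ‖(g d : ℂ) * (((2*N/d - N/d : ℕ) : ℝ) : ℂ) - (g d : ℂ) * (((N:ℝ)/d : ℝ) : ℂ)‖
          ≤ G * (Q:ℝ)^ε := by
      intro d hd
      simp only [hDldef, Finset.mem_filter, Finset.mem_Icc] at hd
      have hd0 : 0 < d := hd.1.1
      have hdR : (0:ℝ) < d := by exact_mod_cast hd0
      have hdiff : |((2*N/d - N/d : ℕ):ℝ) - (N:ℝ)/d| ≤ 1 := by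
        have hmono : N/d ≤ 2*N/d := Nat.div_le_div_right (by omega)
        have h1 : ((N/d : ℕ):ℝ) ≤ (N:ℝ)/d := Nat.cast_div_le
        have h2 : ((2*N/d : ℕ):ℝ) ≤ ((2*N:ℕ):ℝ)/d := Nat.cast_div_le
        have l1 : (N:ℝ)/d < ((N/d:ℕ):ℝ) + 1 := cast_div_lt N d hd0
        have l2 : ((2*N:ℕ):ℝ)/d < ((2*N/d:ℕ):ℝ) + 1 := cast_div_lt (2*N) d hd0
        rw [Nat.cast_sub hmono]
        have hc : ((2*N:ℕ):ℝ) = 2*(N:ℝ) := by push_cast; ring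
        rw [hc] at h2 l2
        have hdd : (2*(N:ℝ))/d = (N:ℝ)/d + (N:ℝ)/d := by ring
        rw [hdd] at h2 l2
        rw [abs_le]
        constructor <;> linarith
      calc ‖(g d : ℂ) * (((2*N/d - N/d : ℕ) : ℝ) : ℂ) - (g d : ℂ) * (((N:ℝ)/d : ℝ) : ℂ)‖
          = ‖((g d * (((2*N/d - N/d : ℕ):ℝ) - (N:ℝ)/d) : ℝ) : ℂ)‖ := by
            push_cast
            ring_nf
        _ = |g d * (((2*N/d - N/d : ℕ):ℝ) - (N:ℝ)/d)| := by rw [Complex.norm_real, Real.norm_eq_abs]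
        _ = |g d| * |((2*N/d - N/d : ℕ):ℝ) - (N:ℝ)/d| := abs_mul _ _
        _ ≤ (G * (Q:ℝ)^ε) * 1 := by
            apply mul_le_mul (hgle d ?_) hdiff (abs_nonneg _) (by positivity)
            simp only [Finset.mem_Icc]
            exact hd.1
        _ = G * (Q:ℝ)^ε := mul_one _
    calc ∑ d ∈ Dl, ‖(g d : ℂ) * (((2*N/d - N/d : ℕ) : ℝ) : ℂ) - (g d : ℂ) * (((N:ℝ)/d : ℝ) : ℂ)‖
        ≤ ∑ _d ∈ Dl, G * (Q:ℝ)^ε := Finset.sum_le_sum hterm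
      _ = Dl.card * (G * (Q:ℝ)^ε) := by rw [Finset.sum_const, nsmul_eq_mul]
      _ ≤ Q * (G * (Q:ℝ)^ε) := by
          apply mul_le_mul_of_nonneg_right ?_ (by positivity)
          have : Dl.card ≤ Q := by
            calc Dl.card ≤ (Finset.Icc 1 Q).card := Finset.card_le_card (Finset.filter_subset _ _)
              _ = Q := by rw [Nat.card_Icc]; omega
          exact_mod_cast this
      _ = G * (Q:ℝ)^ε * Q := by ring
  set B : ℕ → ℝ := fun s => (ℓ:ℝ)/(2 * min (s:ℝ) ((ℓ:ℝ) - s)) with hBdef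
  have hE2 : ‖∑ d ∈ Dn, F d‖
      ≤ G * (Q:ℝ)^ε * ((↑(Q/ℓ) + 1) * ((ℓ:ℝ) * (1 + Real.log ℓ))) := by
    refine (norm_sum_le _ _).trans ?_
    have hterm : ∀ d ∈ Dn, ‖F d‖ ≤ (G * (Q:ℝ)^ε) * B (d * j % ℓ) := by
      intro d hd
      simp only [hDndef, Finset.mem_filter, Finset.mem_Icc] at hd
      have hd0 : 0 < d := hd.1.1
      set s := d * j % ℓ with hsdef
      have hs2 : s < ℓ := Nat.mod_lt _ hℓ0
      have hs1 : 1 ≤ s := by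
        rcases Nat.eq_zero_or_pos s with h0 | h
        · exfalso
          have hdvd : ℓ ∣ d * j := Nat.dvd_of_mod_eq_zero h0
          exact hd.2 ((Nat.Coprime.dvd_of_dvd_mul_right hcop.symm) hdvd)
        · exact h
      set z : ℂ := expi ((s:ℝ)/ℓ) with hzdef
      set mn : ℝ := min (s:ℝ) ((ℓ:ℝ) - s) with hmndef
      have hmn1 : (1:ℝ) ≤ mn := by
        rw [hmndef, le_min_iff]
        constructor
        · exact_mod_cast hs1
        · have h1 : (s:ℝ) ≤ (ℓ:ℝ) - 1 := by
            have : (s:ℝ) + 1 ≤ ℓ := by exact_mod_cast hs2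
            linarith
          linarith
      have hmn0 : (0:ℝ) < mn := by linarith
      have hnormlow : 4 * mn / ℓ ≤ ‖z - 1‖ := by
        rw [hzdef, norm_expi_sub_one]
        have hsin := sin_lower ℓ s hs1 hs2
        have habs : Real.sin (Real.pi * ((s:ℝ)/ℓ)) ≤ |Real.sin (Real.pi * ((s:ℝ)/ℓ))| :=
          le_abs_self _
        rw [← hmndef] at hsin
        calc 4 * mn / ℓ = 2 * (2 * mn / ℓ) := by ring
          _ ≤ 2 * Real.sin (Real.pi * ((s:ℝ)/ℓ)) := by linarith
          _ ≤ 2 * |Real.sin (Real.pi * ((s:ℝ)/ℓ))| := by linarith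
      have hz1 : z ≠ 1 := by
        intro h
        rw [h, sub_self, norm_zero] at hnormlow
        have : (0:ℝ) < 4 * mn / ℓ := by positivity
        linarith
      have hzval : expi ((d:ℝ) * j / ℓ) = z := by
        have hq := Nat.div_add_mod (d * j) ℓ
        have harg : (d:ℝ) * j / ℓ = ((d * j / ℓ : ℕ) : ℝ) + (s:ℝ)/ℓ := by
          have hcast : ((d:ℝ) * j) = (ℓ:ℝ) * ((d * j / ℓ : ℕ):ℝ) + (s:ℝ) := by
            exact_mod_cast hq.symm
          field_simp
          linarith [hcast]
        rw [harg, expi_add, expi_nat, one_mul, hzdef]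
      have hinner : ∑ m ∈ Finset.Ioc (N/d) (2*N/d), expi ((d:ℝ) * m * j / ℓ)
          = ∑ m ∈ Finset.Ioc (N/d) (2*N/d), z ^ m := by
        refine Finset.sum_congr rfl fun m _ => ?_
        have : (d:ℝ) * m * j / ℓ = (m:ℝ) * ((d:ℝ) * j / ℓ) := by ring
        rw [this, expi_nat_mul, hzval]
      have hgeom : ‖∑ m ∈ Finset.Ioc (N/d) (2*N/d), z ^ m‖ ≤ 2 / ‖z - 1‖ :=
        geom_bound z (by rw [hzdef]; exact norm_expi _) hz1 _ _
      have hBs : 2 / ‖z - 1‖ ≤ B s := by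
        have h24 : 2 / ‖z - 1‖ ≤ 2 / (4 * mn / ℓ) :=
          div_le_div_of_nonneg_left (by norm_num) (by positivity) hnormlow
        have heq : 2 / (4 * mn / ℓ) = (ℓ:ℝ) / (2 * mn) := by
          field_simp
          ring
        rw [hBdef]
        simp only [← hmndef]
        rw [← heq]
        exact h24
      rw [hFdef]
      simp only
      rw [norm_mul, hinner]
      have hgd : ‖((g d : ℝ) : ℂ)‖ ≤ G * (Q:ℝ)^ε := by
        rw [Complex.norm_real, Real.norm_eq_abs]
        exact hgle d (by simp only [Finset.mem_Icc]; exact hd.1)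
      exact mul_le_mul hgd (hgeom.trans hBs) (norm_nonneg _) (by positivity)
    calc ∑ d ∈ Dn, ‖F d‖ ≤ ∑ d ∈ Dn, (G * (Q:ℝ)^ε) * B (d * j % ℓ) :=
          Finset.sum_le_sum hterm
      _ = (G * (Q:ℝ)^ε) * ∑ d ∈ Dn, B (d * j % ℓ) := by rw [← Finset.mul_sum]
      _ ≤ (G * (Q:ℝ)^ε) * ((↑(Q/ℓ) + 1) * ∑ t ∈ Finset.Ico 1 ℓ, B t) := by
          apply mul_le_mul_of_nonneg_left ?_ (by positivity)
          rw [hDndef]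
          apply group_bound Q ℓ j hℓ hcop B
          intro t ht
          simp only [Finset.mem_Ico] at ht
          have h1 : (1:ℝ) ≤ (t:ℝ) := by exact_mod_cast ht.1
          have h2 : (t:ℝ) + 1 ≤ ℓ := by exact_mod_cast ht.2
          have : (0:ℝ) < min (t:ℝ) ((ℓ:ℝ) - t) := by
            rw [lt_min_iff]; constructor <;> linarith
          rw [hBdef]
          positivity
      _ ≤ G * (Q:ℝ)^ε * ((↑(Q/ℓ) + 1) * ((ℓ:ℝ) * (1 + Real.log ℓ))) := by
          apply mul_le_mul_of_nonneg_left ?_ (by positivity)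
          apply mul_le_mul_of_nonneg_left ?_ (by positivity)
          exact Bsum_le ℓ hℓ
  -- final assembly
  rw [stepA, hsplit]
  have tri : ‖∑ d ∈ Dl, F d + ∑ d ∈ Dn, F d - ((Rcoef g Q ℓ * N : ℝ):ℂ)‖
      ≤ ‖∑ d ∈ Dl, F d - ((Rcoef g Q ℓ * N : ℝ):ℂ)‖ + ‖∑ d ∈ Dn, F d‖ := by
    have h : ∑ d ∈ Dl, F d + ∑ d ∈ Dn, F d - ((Rcoef g Q ℓ * N : ℝ):ℂ)
        = (∑ d ∈ Dl, F d - ((Rcoef g Q ℓ * N : ℝ):ℂ)) + ∑ d ∈ Dn, F d := by ring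
    rw [h]
    exact norm_add_le _ _
  refine (tri.trans (add_le_add hE1 hE2)).trans ?_
  set X : ℝ := ((ℓ:ℝ) * Q)^ε with hXdef
  have hX : X = (ℓ:ℝ)^ε * (Q:ℝ)^ε := Real.mul_rpow hℓR.le hQR.le
  have hQe : (0:ℝ) < (Q:ℝ)^ε := Real.rpow_pos_of_pos hQR ε
  have hl1 : (1:ℝ) ≤ (ℓ:ℝ)^ε := by
    rw [← Real.one_rpow ε]
    exact Real.rpow_le_rpow zero_le_one (by exact_mod_cast hℓ0) hε.le
  have hlog0 : (0:ℝ) ≤ Real.log ℓ := Real.log_nonneg (by exact_mod_cast hℓ0)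
  have hlog : 1 + Real.log ℓ ≤ (1 + 1/ε) * (ℓ:ℝ)^ε := by
    have a := Real.log_le_rpow_div (Nat.cast_nonneg ℓ) hε
    calc 1 + Real.log ℓ ≤ (ℓ:ℝ)^ε + (ℓ:ℝ)^ε/ε := by linarith
      _ = (1 + 1/ε) * (ℓ:ℝ)^ε := by field_simp
  have hfloor : ((↑(Q/ℓ):ℝ) + 1) * (ℓ:ℝ) ≤ (Q:ℝ) + ℓ := by
    have hn : ((Q/ℓ:ℕ):ℝ) * (ℓ:ℝ) ≤ (Q:ℝ) := by
      exact_mod_cast Nat.div_mul_le_self Q ℓ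
    have he : ((↑(Q/ℓ):ℝ) + 1) * (ℓ:ℝ) = ((Q/ℓ:ℕ):ℝ) * (ℓ:ℝ) + ℓ := by ring
    rw [he]
    linarith
  have h1 : G * (Q:ℝ)^ε * (Q:ℝ) ≤ G * X * ((Q:ℝ) + ℓ) := by
    have key : (Q:ℝ) ≤ (ℓ:ℝ)^ε * ((Q:ℝ) + ℓ) := by
      calc (Q:ℝ) ≤ (Q:ℝ) + ℓ := by linarith
        _ = 1 * ((Q:ℝ) + ℓ) := (one_mul _).symm
        _ ≤ (ℓ:ℝ)^ε * ((Q:ℝ) + ℓ) := mul_le_mul_of_nonneg_right hl1 (by positivity)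
    calc G * (Q:ℝ)^ε * (Q:ℝ) = G * (Q:ℝ)^ε * (Q:ℝ) := rfl
      _ ≤ G * (Q:ℝ)^ε * ((ℓ:ℝ)^ε * ((Q:ℝ) + ℓ)) := by
          apply mul_le_mul_of_nonneg_left key (mul_nonneg hG0 hQe.le)
      _ = G * X * ((Q:ℝ) + ℓ) := by rw [hX]; ring
  have h2 : G * (Q:ℝ)^ε * ((↑(Q/ℓ) + 1) * ((ℓ:ℝ) * (1 + Real.log ℓ)))
      ≤ G * (1 + 1/ε) * X * ((Q:ℝ) + ℓ) := by
    have k1 : ((↑(Q/ℓ):ℝ) + 1) * ((ℓ:ℝ) * (1 + Real.log ℓ))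
        ≤ ((Q:ℝ) + ℓ) * ((1 + 1/ε) * (ℓ:ℝ)^ε) := by
      have c : (0:ℝ) ≤ 1 + Real.log ℓ := by linarith
      calc ((↑(Q/ℓ):ℝ) + 1) * ((ℓ:ℝ) * (1 + Real.log ℓ))
          = (((↑(Q/ℓ):ℝ) + 1) * (ℓ:ℝ)) * (1 + Real.log ℓ) := by ring
        _ ≤ ((Q:ℝ) + ℓ) * (1 + Real.log ℓ) := mul_le_mul_of_nonneg_right hfloor c
        _ ≤ ((Q:ℝ) + ℓ) * ((1 + 1/ε) * (ℓ:ℝ)^ε) :=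
            mul_le_mul_of_nonneg_left hlog (by positivity)
    calc G * (Q:ℝ)^ε * ((↑(Q/ℓ) + 1) * ((ℓ:ℝ) * (1 + Real.log ℓ)))
        ≤ G * (Q:ℝ)^ε * (((Q:ℝ) + ℓ) * ((1 + 1/ε) * (ℓ:ℝ)^ε)) :=
          mul_le_mul_of_nonneg_left k1 (mul_nonneg hG0 hQe.le)
      _ = G * (1 + 1/ε) * X * ((Q:ℝ) + ℓ) := by rw [hX]; ring
  have hXnn : (0:ℝ) ≤ X * ((Q:ℝ) + ℓ) := by
    apply mul_nonneg
    · rw [hXdef]; positivity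
    · positivity
  calc G * (Q:ℝ)^ε * Q + G * (Q:ℝ)^ε * ((↑(Q/ℓ) + 1) * ((ℓ:ℝ) * (1 + Real.log ℓ)))
      ≤ G * X * ((Q:ℝ) + ℓ) + G * (1 + 1/ε) * X * ((Q:ℝ) + ℓ) := add_le_add h1 h2
    _ = G * (2 + 1/ε) * (X * ((Q:ℝ) + ℓ)) := by ring
    _ ≤ (G + 1) * (2 + 1/ε) * (X * ((Q:ℝ) + ℓ)) := by
        apply mul_le_mul_of_nonneg_right ?_ hXnn
        apply mul_le_mul_of_nonneg_right (by linarith : G ≤ G + 1) (by positivity)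
    _ = (G + 1) * (2 + 1/ε) * X * ((Q:ℝ) + ℓ) := by ring
end
end
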